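/- Let L be a positive integer and let Q = {x ∈ ℝ^{2n−1} : L − 1/2 < x₁ < L + 1/2}. For every bit vector a ∈ {0,1}ⁿ: if S(a) ≠ L then the (2n−1)-dimensional Lebesgue volume of T_a ∩ Q equals 0, and if S(a) = L then the (2n−1)-dimensional Lebesgue volume of T_a ∩ Q equals (1/(2n))^{2n−1} (equivalently, T_a ⊆ Q in that case). -/

import Mathlib

open MeasureTheory
open scoped ENNReal

noncomputable section

/-- The value `a_{m−n+1} s_{m−n+1}` carried by a leaf of the heap-indexed binary tree
(0-based: index `j` is a leaf when `n − 1 ≤ j`, carrying `s_{j−(n−1)}`); the value is `0`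
on internal nodes. -/
def leafWeight (n : ℕ) (s : Fin n → ℕ) (a : Fin n → Bool) (j : Fin (2 * n - 1)) : ℝ :=
  if _ : n - 1 ≤ (j : ℕ) then
    (if a ⟨(j : ℕ) - (n - 1), by have := j.isLt; omega⟩ then
      (s ⟨(j : ℕ) - (n - 1), by have := j.isLt; omega⟩ : ℝ) else 0)
  else 0

/-- The tree region `T_a ⊆ ℝ^{2n−1}` : coordinates are indexed in heap order (0-based:
node `j` is internal when `j < n − 1`, with children `2j+1` and `2j+2`; the nodes
`n − 1 ≤ j` are leaves). A point `x` lies in `T_a` iff for every leaf `j`,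
`a_j s_j − 1/(4n) < x_j < a_j s_j + 1/(4n)`, and for every internal node `j`,
`x_{2j+1} + x_{2j+2} − 1/(4n) < x_j < x_{2j+1} + x_{2j+2} + 1/(4n)`. -/
def treeRegion (n : ℕ) (s : Fin n → ℕ) (a : Fin n → Bool) : Set (Fin (2 * n - 1) → ℝ) :=
  {x | (∀ j : Fin (2 * n - 1), n - 1 ≤ (j : ℕ) →
          (leafWeight n s a j - 1 / (4 * (n : ℝ)) < x j ∧
           x j < leafWeight n s a j + 1 / (4 * (n : ℝ)))) ∧
       (∀ j : Fin (2 * n - 1), ∀ h : (j : ℕ) < n - 1,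
          (x ⟨2 * (j : ℕ) + 1, by omega⟩ + x ⟨2 * (j : ℕ) + 2, by omega⟩ - 1 / (4 * (n : ℝ))
              < x j ∧
           x j < x ⟨2 * (j : ℕ) + 1, by omega⟩ + x ⟨2 * (j : ℕ) + 2, by omega⟩
              + 1 / (4 * (n : ℝ))))}

namespace TreeAux

/-- Weight attached to the tree node with absolute heap index `l` (meaningful for
leaves `l ≥ n − 1`). -/
def W (n : ℕ) (s : Fin n → ℕ) (a : Fin n → Bool) (l : ℕ) : ℝ :=
  if h : l - (n - 1) < n then
    (if a ⟨l - (n - 1), h⟩ then (s ⟨l - (n - 1), h⟩ : ℝ) else 0)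
  else 0

/-- Ideal value of node `j` at level `m` of a heap with `k` levels of internal nodes:
the sum of the weights of the leaves below `j`. -/
def V (n : ℕ) (s : Fin n → ℕ) (a : Fin n → Bool) (k m j : ℕ) : ℝ :=
  ∑ i ∈ Finset.range (2 ^ (k - m)), W n s a ((j + 1) * 2 ^ (k - m) - 1 + i)

lemma V_rec (n : ℕ) (s : Fin n → ℕ) (a : Fin n → Bool) (k m j : ℕ) (hm : m < k) :
    V n s a k m j = V n s a k (m + 1) (2 * j + 1) + V n s a k (m + 1) (2 * j + 2) := by
  obtain ⟨t, ht⟩ : ∃ t, t = k - (m + 1) := ⟨_, rfl⟩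
  have hkm : k - m = t + 1 := by omega
  have hp : 1 ≤ 2 ^ t := Nat.one_le_two_pow
  have hA : (j + 1) * (2 ^ t + 2 ^ t) = (2 * j + 1 + 1) * 2 ^ t := by ring
  have hB : (2 * j + 2 + 1) * 2 ^ t = (2 * j + 1 + 1) * 2 ^ t + 2 ^ t := by ring
  have hP : 1 ≤ (2 * j + 1 + 1) * 2 ^ t := Nat.mul_pos (by omega) (Nat.two_pow_pos t)
  simp only [V, hkm, ← ht, pow_succ, mul_two]
  rw [Finset.sum_range_add]
  congr 1
  · exact Finset.sum_congr rfl fun i _ => by rw [hA]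
  · exact Finset.sum_congr rfl fun i _ => by congr 1; rw [hA, hB]; omega

lemma leafWeight_eq_W (n : ℕ) (s : Fin n → ℕ) (a : Fin n → Bool) (j : ℕ)
    (h1 : n - 1 ≤ j) (hj : j < 2 * n - 1) :
    leafWeight n s a ⟨j, hj⟩ = W n s a j := by
  rw [leafWeight, W, dif_pos h1, dif_pos (by omega)]

/-- Key error estimate: the coordinate at a node of height `d` deviates from its ideal
value by less than `(2^(d+1) − 1)/(4n)`. -/
lemma err (n k : ℕ) (hn : n = 2 ^ k) (s : Fin n → ℕ) (a : Fin n → Bool)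
    (x : Fin (2 * n - 1) → ℝ) (hx : x ∈ treeRegion n s a) :
    ∀ d, d ≤ k → ∀ j, 2 ^ (k - d) ≤ j + 1 → j + 2 ≤ 2 ^ (k - d) * 2 →
      ∀ hj : j < 2 * n - 1,
      |x ⟨j, hj⟩ - V n s a k (k - d) j| < ((2 : ℝ) ^ (d + 1) - 1) / (4 * n) := by
  have hn0 : 0 < n := hn ▸ Nat.two_pow_pos k
  have hn0R : (0 : ℝ) < 4 * n := by positivity
  intro d
  induction d with
  | zero =>
    intro _ j hj1 hj2 hj
    rw [Nat.sub_zero] at hj1 hj2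
    have hle : n - 1 ≤ j := by omega
    have hV : V n s a k (k - 0) j = W n s a j := by
      simp only [V, Nat.sub_zero, Nat.sub_self, pow_zero, Finset.sum_range_one, mul_one,
        Nat.add_zero, Nat.add_sub_cancel]
    obtain ⟨hl, hr⟩ := hx.1 ⟨j, hj⟩ hle
    rw [leafWeight_eq_W n s a j hle hj] at hl hr
    rw [hV, abs_sub_lt_iff]
    have h2 : ((2 : ℝ) ^ (0 + 1) - 1) = 1 := by norm_num
    rw [h2]
    constructor <;> linarith
  | succ d ih =>
    intro hdk j hj1 hj2 hj
    set m := k - (d + 1) with hm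
    have hm1 : m + 1 = k - d := by omega
    have hpk : (2 : ℕ) ^ (m + 1) ≤ 2 ^ k := Nat.pow_le_pow_right (by norm_num) (by omega)
    have hps : (2 : ℕ) ^ (m + 1) = 2 ^ m * 2 := pow_succ 2 m
    have hkd : (2 : ℕ) ^ (k - d) = 2 ^ m * 2 := by rw [← hm1, pow_succ]
    have hp : 1 ≤ (2 : ℕ) ^ m := Nat.one_le_two_pow
    have hjlt : j < n - 1 := by omega
    have hc1 : 2 * j + 1 < 2 * n - 1 := by omega
    have hc2 : 2 * j + 2 < 2 * n - 1 := by omega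
    have h1 := ih (by omega) (2 * j + 1) (by omega) (by omega) hc1
    have h2 := ih (by omega) (2 * j + 2) (by omega) (by omega) hc2
    obtain ⟨hl, hr⟩ := hx.2 ⟨j, hj⟩ hjlt
    have hVr : V n s a k m j = V n s a k (k - d) (2 * j + 1) + V n s a k (k - d) (2 * j + 2) := by
      rw [V_rec n s a k m j (by omega), hm1]
    rw [hVr]
    have key : ((2 : ℝ) ^ (d + 1 + 1) - 1) / (4 * n)
        = 1 / (4 * n) + (((2 : ℝ) ^ (d + 1) - 1) / (4 * n)
            + ((2 : ℝ) ^ (d + 1) - 1) / (4 * n)) := by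
      rw [pow_succ]; field_simp; ring
    rw [key, abs_sub_lt_iff]
    rw [abs_sub_lt_iff] at h1 h2
    obtain ⟨h1a, h1b⟩ := h1
    obtain ⟨h2a, h2b⟩ := h2
    constructor <;> linarith

lemma V_zero (n k : ℕ) (hn : n = 2 ^ k) (s : Fin n → ℕ) (a : Fin n → Bool) :
    V n s a k 0 0 = ∑ i : Fin n, (if a i then (s i : ℝ) else 0) := by
  have hn0 : 0 < n := hn ▸ Nat.two_pow_pos k
  have hr : (2 : ℕ) ^ (k - 0) = n := by rw [Nat.sub_zero, hn]
  rw [V, hr, ← Fin.sum_univ_eq_sum_range (fun i => W n s a ((0 + 1) * n - 1 + i)) n]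
  refine Finset.sum_congr rfl fun i _ => ?_
  have hi := i.isLt
  have hidx : (0 + 1) * n - 1 + (i : ℕ) - (n - 1) = (i : ℕ) := by omega
  rw [W, dif_pos (show (0 + 1) * n - 1 + (i : ℕ) - (n - 1) < n by omega)]
  simp only [hidx, Fin.eta]

/-- The unipotent linear map sending `x` to the vector of differences
`x j − (x (2j+1) + x (2j+2))` (and `x j` at leaves). -/
def childLin (n : ℕ) : (Fin (2 * n - 1) → ℝ) →ₗ[ℝ] (Fin (2 * n - 1) → ℝ) where
  toFun x := fun j => x j - (if h : (j : ℕ) < n - 1 then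
      x ⟨2 * (j : ℕ) + 1, by omega⟩ + x ⟨2 * (j : ℕ) + 2, by omega⟩ else 0)
  map_add' x y := by
    funext j
    by_cases h : (j : ℕ) < n - 1 <;> simp [h] <;> ring
  map_smul' c x := by
    funext j
    by_cases h : (j : ℕ) < n - 1 <;> simp [h] <;> ring

lemma det_childLin (n : ℕ) : LinearMap.det (childLin n) = 1 := by
  rw [← LinearMap.det_toMatrix' (childLin n)]
  have ht : (LinearMap.toMatrix' (childLin n)).BlockTriangular id := by
    intro i j hij
    have hji : (j : ℕ) < (i : ℕ) := hij
    rw [LinearMap.toMatrix'_apply]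
    simp only [childLin, LinearMap.coe_mk, AddHom.coe_mk]
    have e0 : ¬ ((i : ℕ) = (j : ℕ)) := by omega
    have e1 : ¬ (2 * (i : ℕ) + 1 = (j : ℕ)) := by omega
    have e2 : ¬ (2 * (i : ℕ) + 2 = (j : ℕ)) := by omega
    simp [Fin.ext_iff, e0, e1, e2]
  rw [Matrix.det_of_upperTriangular ht]
  refine Finset.prod_eq_one fun i _ => ?_
  rw [LinearMap.toMatrix'_apply]
  simp only [childLin, LinearMap.coe_mk, AddHom.coe_mk]
  have e1 : ¬ (2 * (i : ℕ) + 1 = (i : ℕ)) := by omega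
  have e2 : ¬ (2 * (i : ℕ) + 2 = (i : ℕ)) := by omega
  simp [Fin.ext_iff, e1, e2]

lemma volume_treeRegion (n : ℕ) (hn0 : 0 < n) (s : Fin n → ℕ) (a : Fin n → Bool) :
    volume (treeRegion n s a) = (ENNReal.ofReal (1 / (2 * (n : ℝ)))) ^ (2 * n - 1) := by
  have hnR : (0 : ℝ) < n := by exact_mod_cast hn0
  have hreg : treeRegion n s a
      = (childLin n) ⁻¹' ((fun z => z + (-(leafWeight n s a))) ⁻¹'
          (Set.univ.pi fun _ : Fin (2 * n - 1) =>
            Set.Ioo (-(1 / (4 * (n : ℝ)))) (1 / (4 * (n : ℝ))))) := by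
    ext x
    simp only [treeRegion, Set.mem_setOf_eq, Set.mem_preimage, Set.mem_pi, Set.mem_univ,
      true_implies, Set.mem_Ioo, Pi.add_apply, Pi.neg_apply, childLin, LinearMap.coe_mk,
      AddHom.coe_mk]
    constructor
    · rintro ⟨hleaf, hint⟩ j
      by_cases h : (j : ℕ) < n - 1
      · rw [dif_pos h]
        have hw : leafWeight n s a j = 0 := by rw [leafWeight, dif_neg (by omega)]
        obtain ⟨h1, h2⟩ := hint j h
        rw [hw]
        constructor <;> linarith
      · rw [dif_neg h]
        obtain ⟨h1, h2⟩ := hleaf j (by omega)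
        constructor <;> linarith
    · intro hmem
      constructor
      · intro j hj
        have hh := hmem j
        rw [dif_neg (by omega)] at hh
        constructor <;> linarith [hh.1, hh.2]
      · intro j hj
        have hh := hmem j
        rw [dif_pos hj] at hh
        have hw : leafWeight n s a j = 0 := by rw [leafWeight, dif_neg (by omega)]
        rw [hw] at hh
        constructor <;> linarith [hh.1, hh.2]
  rw [hreg]
  rw [MeasureTheory.Measure.addHaar_preimage_linearMap volume
      (show LinearMap.det (childLin n) ≠ 0 by rw [det_childLin]; norm_num)]
  rw [measure_preimage_add_right]
  rw [volume_pi_pi]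
  simp only [Real.volume_Ioo, det_childLin, inv_one, abs_one, ENNReal.ofReal_one, one_mul]
  rw [Finset.prod_const, Finset.card_univ, Fintype.card_fin]
  congr 2
  rw [sub_neg_eq_add]
  field_simp
  ring

end TreeAux

theorem treeRegion_query (k : ℕ) (hk : 1 ≤ k) (n : ℕ) (hn : n = 2 ^ k)
    (s : Fin n → ℕ) (hs : ∀ i, 0 < s i) (a : Fin n → Bool) (L : ℕ) (hL : 0 < L) :
    let root : Fin (2 * n - 1) := ⟨0, by have := Nat.one_le_two_pow (n := k); omega⟩
    let Q : Set (Fin (2 * n - 1) → ℝ) :=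
      {x | (L : ℝ) - 1 / 2 < x root ∧ x root < (L : ℝ) + 1 / 2}
    ((∑ i : Fin n, if a i then s i else 0) ≠ L →
        volume (treeRegion n s a ∩ Q) = 0) ∧
    ((∑ i : Fin n, if a i then s i else 0) = L →
        treeRegion n s a ⊆ Q ∧
        volume (treeRegion n s a ∩ Q) = (1 / (2 * (n : ℝ≥0∞))) ^ (2 * n - 1)) := by
  intro root Q
  have hn0 : 0 < n := hn ▸ Nat.two_pow_pos k
  have hnR : (0 : ℝ) < n := by exact_mod_cast hn0
  have hj0 : (0 : ℕ) < 2 * n - 1 := by omega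
  set S : ℕ := ∑ i : Fin n, if a i then s i else 0 with hS
  have hScast : (S : ℝ) = ∑ i : Fin n, (if a i then (s i : ℝ) else 0) := by
    rw [hS]
    push_cast
    exact Finset.sum_congr rfl fun i _ => by split <;> simp
  have root_err : ∀ x ∈ treeRegion n s a, |x root - (S : ℝ)| < 1 / 2 := by
    intro x hx
    have h := TreeAux.err n k hn s a x hx k le_rfl 0
      (by simp [Nat.sub_self]) (by simp [Nat.sub_self]) hj0
    rw [Nat.sub_self] at h
    rw [TreeAux.V_zero n k hn s a, ← hScast] at h
    have hroot : root = (⟨0, hj0⟩ : Fin (2 * n - 1)) := rfl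
    rw [hroot]
    refine lt_of_lt_of_le h ?_
    have hcast : ((2 : ℝ) ^ (k + 1)) = 2 * n := by
      rw [hn]; push_cast; rw [pow_succ]; ring
    rw [hcast, div_le_iff₀ (by positivity)]
    nlinarith
  constructor
  · intro hne
    have hTQ : treeRegion n s a ∩ Q = ∅ := by
      rw [Set.eq_empty_iff_forall_notMem]
      rintro x ⟨hxT, hq1, hq2⟩
      have h1 := root_err x hxT
      rw [abs_sub_lt_iff] at h1
      have hSL : S = L := by
        have haa : (S : ℝ) < (L : ℝ) + 1 := by linarith
        have hb : (L : ℝ) < (S : ℝ) + 1 := by linarith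
        have ha' : S < L + 1 := by exact_mod_cast haa
        have hb' : L < S + 1 := by exact_mod_cast hb
        omega
      exact hne hSL
    rw [hTQ]; exact measure_empty
  · intro heq
    have hSL : (S : ℝ) = (L : ℝ) := by exact_mod_cast heq
    have hsub : treeRegion n s a ⊆ Q := by
      intro x hx
      have h1 := root_err x hx
      rw [abs_sub_lt_iff] at h1
      exact ⟨by linarith [h1.2], by linarith [h1.1]⟩
    refine ⟨hsub, ?_⟩
    rw [Set.inter_eq_self_of_subset_left hsub,
      TreeAux.volume_treeRegion n hn0 s a]
    congr 1
    rw [ENNReal.ofReal_div_of_pos (by positivity), ENNReal.ofReal_one,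
      ENNReal.ofReal_mul (by norm_num), ENNReal.ofReal_ofNat, ENNReal.ofReal_natCast]
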